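/- Let c ∈ ℝ and let φ : ℝ → ℂ be twice continuously differentiable with φ(0) = 0 and φ(1) = 0. For N ∈ ℕ set ψ_N(x) = exp(i·N·c·x²)·φ(x) and E(N) = −(1/2)·∫₀¹ conj(ψ_N(x))·ψ_N''(x) dx. Then for all N ∈ ℕ: E(N) = (2c²·∫₀¹ x²·|φ(x)|² dx)·N² + (2c·Im ∫₀¹ x·conj(φ(x))·φ'(x) dx)·N + E(0). In particular E(N) is a quadratic polynomial in N with nonnegative leading coefficient 2c²·∫₀¹ x²|φ(x)|² dx. -/

import Mathlib

open MeasureTheory intervalIntegral Complex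

private lemma conj_intervalIntegral (f : ℝ → ℂ) (a b : ℝ) :
    (starRingEnd ℂ) (∫ x in a..b, f x) = ∫ x in a..b, (starRingEnd ℂ) (f x) := by
  rw [intervalIntegral, intervalIntegral, map_sub, ← integral_conj, ← integral_conj]

private lemma hasDerivAt_gauss (a x : ℝ) :
    HasDerivAt (fun x : ℝ => Complex.exp (Complex.I * (a : ℂ) * (x : ℂ) ^ 2))
      (Complex.exp (Complex.I * (a : ℂ) * (x : ℂ) ^ 2) * (Complex.I * (a : ℂ) * (2 * (x : ℂ))))
      x := by
  have h1 : HasDerivAt (fun x : ℝ => ((x : ℂ))) 1 x := Complex.ofRealCLM.hasDerivAt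
  have h2 := ((h1.mul h1).const_mul (Complex.I * (a : ℂ)))
  have h3 := h2.cexp
  simp only [Pi.mul_apply, ← sq] at h3
  convert h3 using 1
  ring

/-- Explicit energy growth formula in the `(1,1)`-resonance example of the
quantum piecewise linear Fermi–Ulam accelerator (the case studied by Šeba):
with `ψ_N(x) = exp(iNcx²)·φ(x)`, the energy `E(N) = −(1/2)∫₀¹ ψ̄_N ψ_N''` is a
quadratic polynomial in `N` with nonnegative leading coefficient
`2c²∫₀¹ x²|φ(x)|² dx`. -/
theorem seba_energy_growth
    (c : ℝ) (φ : ℝ → ℂ) (hφ : ContDiff ℝ 2 φ)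
    (h0 : φ 0 = 0) (h1 : φ 1 = 0)
    (ψ : ℕ → ℝ → ℂ)
    (hψ : ∀ (N : ℕ) (x : ℝ), ψ N x = Complex.exp (Complex.I * (N : ℂ) * (c : ℂ) * (x : ℂ)^2) * φ x)
    (E : ℕ → ℂ)
    (hE : ∀ N : ℕ, E N = -(1/2 : ℂ) *
      ∫ x in (0:ℝ)..1, (starRingEnd ℂ) (ψ N x) * deriv (deriv (ψ N)) x) :
    (∀ N : ℕ, E N =
      ((2 * c^2 * ∫ x in (0:ℝ)..1, x^2 * ‖φ x‖^2 : ℝ) : ℂ) * (N : ℂ)^2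
      + ((2 * c * (∫ x in (0:ℝ)..1, (x : ℂ) * (starRingEnd ℂ) (φ x) * deriv φ x).im : ℝ) : ℂ) * (N : ℂ)
      + E 0)
    ∧ 0 ≤ 2 * c^2 * ∫ x in (0:ℝ)..1, x^2 * ‖φ x‖^2 := by
  -- regularity facts
  have h2' : ContDiff ℝ ((1 : WithTop ℕ∞) + 1) φ := by exact_mod_cast hφ
  have hA' := contDiff_succ_iff_deriv.mp h2'
  have hB' := contDiff_succ_iff_deriv.mp
    ((by exact_mod_cast hA'.2.2 : ContDiff ℝ ((0 : WithTop ℕ∞) + 1) (deriv φ)))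
  have hdφ : Differentiable ℝ φ := hA'.1
  have hdφ' : Differentiable ℝ (deriv φ) := hB'.1
  have hcφ : Continuous φ := hdφ.continuous
  have hcφ' : Continuous (deriv φ) := hdφ'.continuous
  have hcφ'' : Continuous (deriv (deriv φ)) := hB'.2.2.continuous
  have hcconj : Continuous fun x : ℝ => (starRingEnd ℂ) (φ x) := Complex.continuous_conj.comp hcφ
  have hcconj' : Continuous fun x : ℝ => (starRingEnd ℂ) (deriv φ x) :=
    Complex.continuous_conj.comp hcφ'
  have hcx : Continuous fun x : ℝ => ((x : ℂ)) := Complex.continuous_ofReal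
  -- the four basic integrals
  set A : ℂ := ∫ x in (0:ℝ)..1, (starRingEnd ℂ) (φ x) * deriv (deriv φ) x with hA
  set J : ℂ := ∫ x in (0:ℝ)..1, (x : ℂ) * (starRingEnd ℂ) (φ x) * deriv φ x with hJ
  set P : ℂ := ∫ x in (0:ℝ)..1, (starRingEnd ℂ) (φ x) * φ x with hP
  set Q : ℂ := ∫ x in (0:ℝ)..1, (x : ℂ)^2 * ((starRingEnd ℂ) (φ x) * φ x) with hQ
  -- integrability
  have i1 : IntervalIntegrable (fun x : ℝ => (starRingEnd ℂ) (φ x) * deriv (deriv φ) x)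
      volume 0 1 := (hcconj.mul hcφ'').intervalIntegrable 0 1
  have i2 : IntervalIntegrable (fun x : ℝ => (x : ℂ) * (starRingEnd ℂ) (φ x) * deriv φ x)
      volume 0 1 := ((hcx.mul hcconj).mul hcφ').intervalIntegrable 0 1
  have i3 : IntervalIntegrable (fun x : ℝ => (starRingEnd ℂ) (φ x) * φ x) volume 0 1 :=
    (hcconj.mul hcφ).intervalIntegrable 0 1
  have i4 : IntervalIntegrable (fun x : ℝ => (x : ℂ)^2 * ((starRingEnd ℂ) (φ x) * φ x))
      volume 0 1 := ((hcx.pow 2).mul (hcconj.mul hcφ)).intervalIntegrable 0 1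
  -- the Gaussian-modulated family
  set G : ℝ → ℝ → ℂ := fun a x => Complex.exp (Complex.I * (a : ℂ) * (x : ℂ) ^ 2) * φ x with hG
  -- key computation of the energy integral for G a
  have key : ∀ a : ℝ,
      (∫ x in (0:ℝ)..1, (starRingEnd ℂ) (G a x) * deriv (deriv (G a)) x) =
      A + (Complex.I * (4 * (a : ℂ))) * J + (Complex.I * (2 * (a : ℂ))) * P
        - (4 * (a : ℂ)^2) * Q := by
    intro a
    set G1 : ℝ → ℂ := fun x =>
      Complex.exp (Complex.I * (a : ℂ) * (x : ℂ) ^ 2) *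
        (deriv φ x + Complex.I * (2 * (a : ℂ)) * ((x : ℂ) * φ x)) with hG1
    have hD1 : ∀ x : ℝ, HasDerivAt (G a) (G1 x) x := by
      intro x
      have := (hasDerivAt_gauss a x).mul (hdφ x).hasDerivAt
      refine this.congr_deriv ?_
      simp only [hG1]
      ring
    have hder1 : deriv (G a) = G1 := funext fun x => (hD1 x).deriv
    set G2 : ℝ → ℂ := fun x =>
      Complex.exp (Complex.I * (a : ℂ) * (x : ℂ) ^ 2) *
        (deriv (deriv φ) x + Complex.I * (4 * (a : ℂ)) * ((x : ℂ) * deriv φ x)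
          + (Complex.I * (2 * (a : ℂ)) - 4 * (a : ℂ)^2 * (x : ℂ)^2) * φ x) with hG2
    have hD2 : ∀ x : ℝ, HasDerivAt G1 (G2 x) x := by
      intro x
      have hx : HasDerivAt (fun y : ℝ => ((y : ℂ)) * φ y) (φ x + (x : ℂ) * deriv φ x) x := by
        have := Complex.ofRealCLM.hasDerivAt.mul (hdφ x).hasDerivAt
        refine this.congr_deriv ?_
        simp only [Complex.ofRealCLM_apply, Complex.ofReal_one]
        ring
      have hh : HasDerivAt
          (fun y : ℝ => deriv φ y + Complex.I * (2 * (a : ℂ)) * ((y : ℂ) * φ y))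
          (deriv (deriv φ) x + Complex.I * (2 * (a : ℂ)) * (φ x + (x : ℂ) * deriv φ x)) x :=
        (hdφ' x).hasDerivAt.add (hx.const_mul (Complex.I * (2 * (a : ℂ))))
      have := (hasDerivAt_gauss a x).mul hh
      refine this.congr_deriv ?_
      symm
      simp only [hG2, hG1]
      have hI := Complex.I_mul_I
      ring_nf
      linear_combination (-4 * (a:ℂ)^2 * (x:ℂ)^2 * Complex.exp (Complex.I * (a : ℂ) * (x : ℂ) ^ 2) * φ x) * hI
    have hder2 : deriv (deriv (G a)) = G2 := by
      rw [hder1]; exact funext fun x => (hD2 x).deriv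
    have hone : ∀ x : ℝ,
        (starRingEnd ℂ) (Complex.exp (Complex.I * (a : ℂ) * (x : ℂ) ^ 2)) *
          Complex.exp (Complex.I * (a : ℂ) * (x : ℂ) ^ 2) = 1 := by
      intro x
      rw [← Complex.exp_conj, ← Complex.exp_add]
      have : (starRingEnd ℂ) (Complex.I * (a : ℂ) * (x : ℂ) ^ 2)
          + Complex.I * (a : ℂ) * (x : ℂ) ^ 2 = 0 := by
        simp [map_mul, Complex.conj_I, Complex.conj_ofReal, map_pow]
      rw [this, Complex.exp_zero]
    have hpt : ∀ x : ℝ, (starRingEnd ℂ) (G a x) * deriv (deriv (G a)) x =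
        (starRingEnd ℂ) (φ x) * deriv (deriv φ) x
        + (Complex.I * (4 * (a : ℂ))) * ((x : ℂ) * (starRingEnd ℂ) (φ x) * deriv φ x)
        + (Complex.I * (2 * (a : ℂ))) * ((starRingEnd ℂ) (φ x) * φ x)
        - (4 * (a : ℂ)^2) * ((x : ℂ)^2 * ((starRingEnd ℂ) (φ x) * φ x)) := by
      intro x
      rw [hder2]
      simp only [hG, hG2, map_mul]
      have h := hone x
      calc (starRingEnd ℂ) (Complex.exp (Complex.I * (a : ℂ) * (x : ℂ) ^ 2)) *
            (starRingEnd ℂ) (φ x) *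
            (Complex.exp (Complex.I * (a : ℂ) * (x : ℂ) ^ 2) *
              (deriv (deriv φ) x + Complex.I * (4 * (a : ℂ)) * ((x : ℂ) * deriv φ x)
                + (Complex.I * (2 * (a : ℂ)) - 4 * (a : ℂ)^2 * (x : ℂ)^2) * φ x))
          = ((starRingEnd ℂ) (Complex.exp (Complex.I * (a : ℂ) * (x : ℂ) ^ 2)) *
              Complex.exp (Complex.I * (a : ℂ) * (x : ℂ) ^ 2)) *
            ((starRingEnd ℂ) (φ x) *
              (deriv (deriv φ) x + Complex.I * (4 * (a : ℂ)) * ((x : ℂ) * deriv φ x)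
                + (Complex.I * (2 * (a : ℂ)) - 4 * (a : ℂ)^2 * (x : ℂ)^2) * φ x)) := by ring
        _ = _ := by rw [h]; ring
    rw [intervalIntegral.integral_congr (g := fun x =>
        (starRingEnd ℂ) (φ x) * deriv (deriv φ) x
        + (Complex.I * (4 * (a : ℂ))) * ((x : ℂ) * (starRingEnd ℂ) (φ x) * deriv φ x)
        + (Complex.I * (2 * (a : ℂ))) * ((starRingEnd ℂ) (φ x) * φ x)
        - (4 * (a : ℂ)^2) * ((x : ℂ)^2 * ((starRingEnd ℂ) (φ x) * φ x)))
      (fun x _ => hpt x)]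
    rw [intervalIntegral.integral_sub ((i1.add (i2.const_mul _)).add (i3.const_mul _))
        (i4.const_mul _),
      intervalIntegral.integral_add (i1.add (i2.const_mul _)) (i3.const_mul _),
      intervalIntegral.integral_add i1 (i2.const_mul _),
      intervalIntegral.integral_const_mul, intervalIntegral.integral_const_mul,
      intervalIntegral.integral_const_mul]
  -- ψ N agrees with G (N c)
  have hψG : ∀ N : ℕ, ψ N = G ((N : ℝ) * c) := by
    intro N
    funext x
    rw [hψ N x]
    simp only [hG]
    push_cast
    ring_nf
  -- energy in terms of the basic integrals
  have hEN : ∀ N : ℕ, E N = -(1/2 : ℂ) *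
      (A + (Complex.I * (4 * (((N : ℝ) * c : ℝ) : ℂ))) * J
        + (Complex.I * (2 * (((N : ℝ) * c : ℝ) : ℂ))) * P
        - (4 * (((N : ℝ) * c : ℝ) : ℂ)^2) * Q) := by
    intro N
    rw [hE N, hψG N, key ((N : ℝ) * c)]
  -- integration by parts: P = -(conj J) - J
  have hibp : P = -(starRingEnd ℂ) J - J := by
    have hu : ∀ x : ℝ, HasDerivAt (fun y : ℝ => ((y : ℂ)) * ((starRingEnd ℂ) (φ y) * φ y))
        ((starRingEnd ℂ) (φ x) * φ x
          + (x : ℂ) * ((starRingEnd ℂ) (deriv φ x) * φ x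
            + (starRingEnd ℂ) (φ x) * deriv φ x)) x := by
      intro x
      have hst : HasDerivAt (fun y : ℝ => (starRingEnd ℂ) (φ y)) ((starRingEnd ℂ) (deriv φ x)) x := by
        simpa only [starRingEnd_apply] using (hdφ x).hasDerivAt.star
      have := Complex.ofRealCLM.hasDerivAt.mul (hst.mul (hdφ x).hasDerivAt)
      refine this.congr_deriv ?_
      simp only [Complex.ofRealCLM_apply, Complex.ofReal_one, Pi.mul_apply]
      ring
    have hcont : IntervalIntegrable (fun x : ℝ => (starRingEnd ℂ) (φ x) * φ x
        + (x : ℂ) * ((starRingEnd ℂ) (deriv φ x) * φ x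
          + (starRingEnd ℂ) (φ x) * deriv φ x)) volume 0 1 :=
      ((hcconj.mul hcφ).add (hcx.mul ((hcconj'.mul hcφ).add (hcconj.mul hcφ')))).intervalIntegrable 0 1
    have hzero := intervalIntegral.integral_eq_sub_of_hasDerivAt
      (f := fun y : ℝ => ((y : ℂ)) * ((starRingEnd ℂ) (φ y) * φ y))
      (fun x _ => hu x) hcont
    simp only [h0, h1, mul_zero, zero_mul, map_zero, Complex.ofReal_one,
      Complex.ofReal_zero, sub_zero] at hzero
    -- split the integral
    have i5 : IntervalIntegrable (fun x : ℝ => (x : ℂ) * ((starRingEnd ℂ) (deriv φ x) * φ x))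
        volume 0 1 := (hcx.mul (hcconj'.mul hcφ)).intervalIntegrable 0 1
    have hsplit : (∫ x in (0:ℝ)..1, ((starRingEnd ℂ) (φ x) * φ x
        + (x : ℂ) * ((starRingEnd ℂ) (deriv φ x) * φ x + (starRingEnd ℂ) (φ x) * deriv φ x)))
        = P + ((∫ x in (0:ℝ)..1, (x : ℂ) * ((starRingEnd ℂ) (deriv φ x) * φ x)) + J) := by
      rw [intervalIntegral.integral_add i3 (by
        have : (fun x : ℝ => (x : ℂ) * ((starRingEnd ℂ) (deriv φ x) * φ x
            + (starRingEnd ℂ) (φ x) * deriv φ x)) =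
            (fun x : ℝ => (x : ℂ) * ((starRingEnd ℂ) (deriv φ x) * φ x)
              + (x : ℂ) * (starRingEnd ℂ) (φ x) * deriv φ x) := by
          funext x; ring
        rw [this]
        exact i5.add i2)]
      congr 1
      have : (fun x : ℝ => (x : ℂ) * ((starRingEnd ℂ) (deriv φ x) * φ x
          + (starRingEnd ℂ) (φ x) * deriv φ x)) =
          (fun x : ℝ => (x : ℂ) * ((starRingEnd ℂ) (deriv φ x) * φ x)
            + (x : ℂ) * (starRingEnd ℂ) (φ x) * deriv φ x) := by
        funext x; ring
      rw [this, intervalIntegral.integral_add i5 i2]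
    have hconjJ : (∫ x in (0:ℝ)..1, (x : ℂ) * ((starRingEnd ℂ) (deriv φ x) * φ x))
        = (starRingEnd ℂ) J := by
      rw [hJ, conj_intervalIntegral]
      apply intervalIntegral.integral_congr
      intro x _
      simp [map_mul, Complex.conj_ofReal]
      ring
    rw [hsplit, hconjJ] at hzero
    linear_combination hzero
  -- Q is real
  have hQreal : Q = ((∫ x in (0:ℝ)..1, x^2 * ‖φ x‖^2 : ℝ) : ℂ) := by
    rw [hQ, ← intervalIntegral.integral_ofReal]
    apply intervalIntegral.integral_congr
    intro x _
    have hm := Complex.mul_conj' (φ x)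
    push_cast
    rw [mul_comm ((starRingEnd ℂ) (φ x)) (φ x), hm]
  have hE0 : E 0 = -(1/2 : ℂ) * A := by
    rw [hEN 0]; norm_num
  constructor
  · intro N
    rw [hEN N, hE0, hibp, hQreal]
    have hsub := Complex.sub_conj J
    have hI := Complex.I_mul_I
    push_cast at hsub ⊢
    linear_combination (-Complex.I * (N : ℂ) * (c : ℂ)) * hsub
      + (-2 * (N : ℂ) * (c : ℂ) * ((J.im : ℂ))) * hI
  · have hnn : 0 ≤ ∫ x in (0:ℝ)..1, x^2 * ‖φ x‖^2 :=
      intervalIntegral.integral_nonneg (by norm_num) (fun x _ => by positivity)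
    have : (0:ℝ) ≤ 2 * c^2 := by positivity
    exact mul_nonneg this hnn
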